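/- arXiv:1811.11649 — 2 statements merged into one kernel-verified Lean document; each statement's English description precedes it below -/
import Mathlib

section
/- For two probability distributions P and Q on a finite alphabet A such that P is absolutely continuous with respect to Q, and with μ defined as the minimum of Q(a) over all a with Q(a) > 0, the KL divergence satisfies D(P||Q) ≤ log(1/μ) · V(P,Q), where V(P,Q) = ∑_a |P(a) − Q(a)| is the total variation distance. -/
open scoped BigOperators Classical

noncomputable section

/-- KL divergence in bits, with the convention that terms with `P a = 0` vanish. -/
def klDiv {A : Type*} [Fintype A] (P Q : A → ℝ) : ℝ :=
  ∑ a, if 0 < P a then P a * Real.logb 2 (P a / Q a) else 0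

/-- Unnormalized total variation distance `∑ |P a - Q a|`. -/
def tv {A : Type*} [Fintype A] (P Q : A → ℝ) : ℝ := ∑ a, |P a - Q a|

/-- `P` is a probability mass function on the finite type `A`. -/
def IsPMF {A : Type*} [Fintype A] (P : A → ℝ) : Prop :=
  (∀ a, 0 ≤ P a) ∧ ∑ a, P a = 1

/-- First marginal of a joint pmf. -/
def margFst {A B : Type*} [Fintype A] [Fintype B] (P : A × B → ℝ) : A → ℝ :=
  fun a => ∑ b, P (a, b)

/-- Second marginal of a joint pmf. -/
def margSnd {A B : Type*} [Fintype A] [Fintype B] (P : A × B → ℝ) : B → ℝ :=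
  fun b => ∑ a, P (a, b)

/-- Mutual information `I(A;B)` (in bits) of a joint pmf on `A × B`. -/
def mi {A B : Type*} [Fintype A] [Fintype B] (P : A × B → ℝ) : ℝ :=
  klDiv P (fun p => margFst P p.1 * margSnd P p.2)

/-- Shannon entropy (in bits). -/
def ent {A : Type*} [Fintype A] (P : A → ℝ) : ℝ :=
  ∑ a, if 0 < P a then -(P a * Real.logb 2 (P a)) else 0

/-- Conditional entropy `H(B|A)` (in bits) of a joint pmf on `A × B`. -/
def condEnt {A B : Type*} [Fintype A] [Fintype B] (P : A × B → ℝ) : ℝ :=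
  ∑ p : A × B, if 0 < P p then -(P p * Real.logb 2 (P p / margFst P p.1)) else 0

/-- Conditional mutual information `I(B;C|A)` (in bits) of a joint pmf on `A × B × C`. -/
def cmi {A B C : Type*} [Fintype A] [Fintype B] [Fintype C] (P : A × B × C → ℝ) : ℝ :=
  ∑ p : A × B × C, if 0 < P p then
    P p * Real.logb 2 ((P p * (∑ b, ∑ c, P (p.1, b, c))) /
      ((∑ c, P (p.1, p.2.1, c)) * (∑ b, P (p.1, b, p.2.2)))) else 0


private lemma psi_nonneg {x : ℝ} (hx0 : 0 ≤ x) (hx : x ≤ 1/2) :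
    0 ≤ -(2 * (x * Real.log x)) + Real.log (1 - x) := by
  have hconv : ConcaveOn ℝ (Set.Icc (0:ℝ) (1/2))
      (fun y => -(2 * (y * Real.log y)) + Real.log (1 - y)) := by
    apply ConcaveOn.add
    · have h1 : ConvexOn ℝ (Set.Icc (0:ℝ) (1/2)) (fun y => y * Real.log y) :=
        Real.convexOn_mul_log.subset (fun y hy => hy.1) (convex_Icc _ _)
      have h2 := (h1.smul (by norm_num : (0:ℝ) ≤ 2)).neg
      convert h2 using 1
      · rfl
      · rfl
      · funext y; simp [smul_eq_mul]
    · refine ⟨convex_Icc _ _, ?_⟩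
      intro u hu v hv a b ha hb hab
      have hu1 : (0:ℝ) < 1 - u := by have := hu.2; norm_num at this ⊢; linarith
      have hv1 : (0:ℝ) < 1 - v := by have := hv.2; norm_num at this ⊢; linarith
      have hkey := (strictConcaveOn_log_Ioi.concaveOn).2 (Set.mem_Ioi.mpr hu1)
        (Set.mem_Ioi.mpr hv1) ha hb hab
      have heq : a • (1 - u) + b • (1 - v) = 1 - (a • u + b • v) := by
        simp only [smul_eq_mul]; linear_combination hab
      rw [heq] at hkey
      simpa using hkey
  have h0 : (0:ℝ) ∈ Set.Icc (0:ℝ) (1/2) := by norm_num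
  have hh : (1/2:ℝ) ∈ Set.Icc (0:ℝ) (1/2) := by norm_num
  have key := hconv.2 h0 hh (by linarith : (0:ℝ) ≤ 1 - 2*x) (by linarith : (0:ℝ) ≤ 2*x)
    (by ring)
  have hpt : (1 - 2*x) • (0:ℝ) + (2*x) • (1/2:ℝ) = x := by
    rw [smul_eq_mul, smul_eq_mul]; ring
  rw [hpt] at key
  norm_num at key
  linarith [key]

private lemma neg_log_le {μ Q : ℝ} (hμ0 : 0 < μ) (h1 : μ ≤ Q) (h2 : Q ≤ 1 - μ) :
    -Real.log Q ≤ 2 * (1 - Q) * (-Real.log μ) := by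
  have hQ0 : 0 < Q := lt_of_lt_of_le hμ0 h1
  have hμ1 : μ < 1 := by linarith
  have hlogμ : Real.log μ < 0 := Real.log_neg hμ0 hμ1
  by_cases hQ : Q ≤ 1/2
  · have hlog : Real.log μ ≤ Real.log Q := Real.log_le_log hμ0 h1
    have h5 : (1:ℝ) ≤ 2*(1-Q) := by linarith
    have h6 : (0:ℝ) ≤ -Real.log μ := by linarith
    have := mul_le_mul_of_nonneg_right h5 h6
    nlinarith [this, hlog]
  · push_neg at hQ
    have hr0 : (0:ℝ) ≤ 1 - Q := by linarith
    have hrhalf : 1 - Q ≤ 1/2 := by linarith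
    have hpsi := psi_nonneg hr0 hrhalf
    have h1r : 1 - (1 - Q) = Q := by ring
    rw [h1r] at hpsi
    have hμr : μ ≤ 1 - Q := by linarith
    have hlogr : Real.log μ ≤ Real.log (1 - Q) := Real.log_le_log hμ0 hμr
    have hmul := mul_le_mul_of_nonneg_left hlogr (by linarith : (0:ℝ) ≤ 2*(1-Q))
    nlinarith [hmul, hpsi]

private lemma chord {P Q : ℝ} (hQ0 : 0 < Q) (hPQ : Q < P) (hP1 : P ≤ 1) :
    (1 - Q) * (P * Real.log (P / Q)) ≤ (P - Q) * (-Real.log Q) := by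
  have hP0 : 0 < P := lt_trans hQ0 hPQ
  have hQ1 : Q < 1 := lt_of_lt_of_le hPQ hP1
  have hd : (0:ℝ) < 1 - Q := by linarith
  have hne : (1:ℝ) - Q ≠ 0 := ne_of_gt hd
  have hab : (1-P)/(1-Q) + (P-Q)/(1-Q) = 1 := by field_simp; ring
  have key := Real.convexOn_mul_log.2 (Set.mem_Ici.mpr hQ0.le)
    (Set.mem_Ici.mpr zero_le_one)
    (div_nonneg (by linarith) hd.le) (div_nonneg (by linarith) hd.le) hab
  simp only [smul_eq_mul] at key
  have hpt : (1-P)/(1-Q) * Q + (P-Q)/(1-Q) * 1 = P := by field_simp; ring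
  rw [hpt] at key
  simp only [Real.log_one, mul_one, mul_zero, add_zero] at key
  have key' : (1 - Q) * (P * Real.log P) ≤ (1 - P) * (Q * Real.log Q) := by
    have h := mul_le_mul_of_nonneg_left key hd.le
    calc (1 - Q) * (P * Real.log P) ≤ (1 - Q) * ((1-P)/(1-Q) * (Q * Real.log Q)) := h
      _ = (1 - P) * (Q * Real.log Q) := by field_simp
  rw [Real.log_div (ne_of_gt hP0) (ne_of_gt hQ0)]
  nlinarith [key']

/-- Lemma 1 of the paper: `D(P‖Q) ≤ log(1/μ) · V(P,Q)` where `μ` is the minimum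
positive mass of `Q` and `P ≪ Q`. -/
theorem stmt0 {A : Type*} [Fintype A] (P Q : A → ℝ) (μ : ℝ)
    (hP : IsPMF P) (hQ : IsPMF Q)
    (hac : ∀ a, 0 < P a → 0 < Q a)
    (hμ : IsLeast {x : ℝ | ∃ a, Q a = x ∧ 0 < x} μ) :
    klDiv P Q ≤ Real.logb 2 (1 / μ) * tv P Q := by
  obtain ⟨hPpos, hPsum⟩ := hP
  obtain ⟨hQpos, hQsum⟩ := hQ
  obtain ⟨⟨a₀, ha₀, hμ0⟩, hlb⟩ := hμ
  rw [← ha₀] at hμ0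
  have hμQ : μ = Q a₀ := ha₀.symm
  have hμ0' : 0 < μ := hμQ ▸ hμ0
  have hμle : ∀ a, 0 < Q a → μ ≤ Q a := fun a ha => hlb ⟨a, rfl, ha⟩
  have hP1 : ∀ a, P a ≤ 1 := by
    intro a
    calc P a ≤ ∑ a', P a' :=
      Finset.single_le_sum (fun a' _ => hPpos a') (Finset.mem_univ a)
    _ = 1 := hPsum
  have hlog2 : (0:ℝ) < Real.log 2 := Real.log_pos one_lt_two
  -- the termwise bound
  have hterm : ∀ a, (if 0 < P a then P a * Real.logb 2 (P a / Q a) else 0)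
      ≤ (if Q a < P a then (P a - Q a) * (2 * Real.logb 2 (1/μ)) else 0) := by
    intro a
    by_cases hQP : Q a < P a
    · have hPa : 0 < P a := lt_of_le_of_lt (hQpos a) hQP
      have hQa : 0 < Q a := hac a hPa
      rw [if_pos hPa, if_pos hQP]
      -- Q a ≤ 1 - μ
      have hQup : Q a ≤ 1 - μ := by
        have hex : ∃ a', a' ≠ a ∧ 0 < Q a' := by
          by_contra hcon
          push_neg at hcon
          have hz : ∀ a' ∈ Finset.univ, a' ≠ a → Q a' = 0 := by
            intro a' _ hne
            exact le_antisymm (le_of_not_gt (fun h => (hcon a' hne).not_gt h)) (hQpos a')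
          have : ∑ a', Q a' = Q a := Finset.sum_eq_single a hz (fun h => absurd (Finset.mem_univ a) h)
          rw [hQsum] at this
          have := hP1 a
          linarith
        obtain ⟨a', hne, hQa'⟩ := hex
        have hμa' : μ ≤ Q a' := hμle a' hQa'
        have hpair : Q a + Q a' ≤ ∑ a'', Q a'' := by
          have : Q a + Q a' = ∑ x ∈ ({a, a'} : Finset A), Q x := by
            rw [Finset.sum_pair (Ne.symm hne)]
          rw [this]
          exact Finset.sum_le_sum_of_subset_of_nonneg (Finset.subset_univ _)
            (fun i _ _ => hQpos i)
        rw [hQsum] at hpair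
        linarith
      -- the real-log inequality
      have h1 := chord hQa hQP (hP1 a)
      have h2 := neg_log_le hμ0' (hμle a hQa) hQup
      have hd : (0:ℝ) < 1 - Q a := by
        have : μ ≤ Q a := hμle a hQa
        linarith
      have h3 : (1 - Q a) * (P a * Real.log (P a / Q a))
          ≤ (1 - Q a) * ((P a - Q a) * (2 * (-Real.log μ))) := by
        refine h1.trans ?_
        have hmul := mul_le_mul_of_nonneg_left h2 (by linarith : (0:ℝ) ≤ P a - Q a)
        nlinarith [hmul]
      have h4 : P a * Real.log (P a / Q a) ≤ (P a - Q a) * (2 * (-Real.log μ)) :=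
        le_of_mul_le_mul_left h3 hd
      -- convert to logb
      rw [Real.logb, Real.logb, one_div, Real.log_inv]
      rw [show P a * (Real.log (P a / Q a) / Real.log 2)
            = (P a * Real.log (P a / Q a)) / Real.log 2 by ring,
          show (P a - Q a) * (2 * (-Real.log μ / Real.log 2))
            = ((P a - Q a) * (2 * (-Real.log μ))) / Real.log 2 by ring]
      exact div_le_div_of_nonneg_right h4 hlog2.le
    · rw [if_neg hQP]
      by_cases hPa : 0 < P a
      · rw [if_pos hPa]
        have hQa : 0 < Q a := hac a hPa
        have hle : P a / Q a ≤ 1 := (div_le_one hQa).mpr (le_of_not_gt hQP)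
        have hlogb : Real.logb 2 (P a / Q a) ≤ 0 :=
          Real.logb_nonpos one_lt_two (by positivity) hle
        exact mul_nonpos_of_nonneg_of_nonpos hPa.le hlogb
      · rw [if_neg hPa]
  -- total variation identity
  have habs : ∀ a, |P a - Q a| = 2 * (if Q a < P a then P a - Q a else 0) - (P a - Q a) := by
    intro a
    by_cases h : Q a < P a
    · rw [if_pos h, abs_of_pos (by linarith)]; ring
    · rw [if_neg h, abs_of_nonpos (by push_neg at h; linarith)]; ring
  have htv : tv P Q = 2 * ∑ a, (if Q a < P a then P a - Q a else 0) := by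
    unfold tv
    rw [Finset.sum_congr rfl (fun a _ => habs a), Finset.sum_sub_distrib,
      Finset.sum_sub_distrib, hPsum, hQsum, ← Finset.mul_sum]
    ring
  calc klDiv P Q ≤ ∑ a, (if Q a < P a then (P a - Q a) * (2 * Real.logb 2 (1/μ)) else 0) :=
        Finset.sum_le_sum (fun a _ => hterm a)
    _ = (2 * Real.logb 2 (1/μ)) * ∑ a, (if Q a < P a then P a - Q a else 0) := by
        rw [Finset.mul_sum]
        refine Finset.sum_congr rfl (fun a _ => ?_)
        split <;> ring
    _ = Real.logb 2 (1/μ) * tv P Q := by rw [htv]; ring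
end
end

section
/- For any pmf P* on the product of finite sets 𝒳_1 × 𝒳_2, there exists a product distribution on 𝒳_1 × 𝒯, where 𝒯 is the set of functions from 𝒳_1 to 𝒳_2, given by P(x_1) = ∑_{x_2} P*(x_1, x_2) and P(t) = ∏_{x_1: P(x_1)>0} P*(x_1, t(x_1)) / P(x_1), such that for all (x_1, x_2) with P(x_1) > 0: P*(x_1, x_2) = P(x_1) · ∑_{t : t(x_1) = x_2} P(t). Moreover P(·) on 𝒯 is a valid probability distribution. -/
open scoped BigOperators Classical

noncomputable section

/-- Shannon-strategy decomposition: any joint pmf `P*` on `𝒳₁ × 𝒳₂` with everywhere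
positive `X₁`-marginal factors as an independent pair `(X₁, T)` with `X₂ = T(X₁)`. -/
theorem stmt11 {X1 X2 : Type*} [Fintype X1] [Fintype X2] [DecidableEq X1]
    [Nonempty X1] [Nonempty X2]
    (Pstar : X1 × X2 → ℝ) (hP : IsPMF Pstar)
    (hpos : ∀ x1, 0 < ∑ x2, Pstar (x1, x2)) :
    (∀ t : X1 → X2,
        0 ≤ ∏ x1, Pstar (x1, t x1) / (∑ x2, Pstar (x1, x2))) ∧
    (∑ t : X1 → X2, ∏ x1, Pstar (x1, t x1) / (∑ x2, Pstar (x1, x2))) = 1 ∧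
    (∀ x1 x2, Pstar (x1, x2) = (∑ x2', Pstar (x1, x2')) *
      ∑ t : X1 → X2, if t x1 = x2
        then ∏ x1', Pstar (x1', t x1') / (∑ x2', Pstar (x1', x2')) else 0) := by
  have hMpos : ∀ x1, 0 < ∑ x2, Pstar (x1, x2) := hpos
  set q : X1 → X2 → ℝ := fun x1 x2 => Pstar (x1, x2) / (∑ x2', Pstar (x1, x2')) with hq
  have hq0 : ∀ x1 x2, 0 ≤ q x1 x2 := fun x1 x2 => div_nonneg (hP.1 _) (hMpos x1).le
  have hqsum : ∀ x1, ∑ x2, q x1 x2 = 1 := by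
    intro x1
    simp only [hq, ← Finset.sum_div]
    exact div_self (hMpos x1).ne'
  have key : (∑ t : X1 → X2, ∏ x1, q x1 (t x1)) = 1 := by
    rw [← Fintype.prod_sum (fun x1 y => q x1 y)]
    simp [hqsum]
  refine ⟨fun t => Finset.prod_nonneg fun x1 _ => hq0 x1 (t x1), key, ?_⟩
  intro x1 x2
  have hsum : (∑ t : X1 → X2, if t x1 = x2 then ∏ x1', q x1' (t x1') else 0)
      = q x1 x2 := by
    have h1 : ∀ t : X1 → X2, (if t x1 = x2 then ∏ x1', q x1' (t x1') else 0)
        = ∏ x1', (fun x1' y => if x1' = x1 then (if y = x2 then q x1 x2 else 0)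
            else q x1' y) x1' (t x1') := by
      intro t
      by_cases h : t x1 = x2
      · simp only [h, if_true]
        refine Finset.prod_congr rfl fun x _ => ?_
        by_cases hx : x = x1 <;> simp [hx, h]
      · rw [if_neg h]
        rw [eq_comm]
        apply Finset.prod_eq_zero (Finset.mem_univ x1)
        simp [h]
    rw [Finset.sum_congr rfl fun t _ => h1 t,
      ← Fintype.prod_sum (fun x1' y => if x1' = x1 then (if y = x2 then q x1 x2 else 0)
          else q x1' y)]
    have h2 : ∀ x : X1, (∑ y : X2, if x = x1 then (if y = x2 then q x1 x2 else 0)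
        else q x y) = if x = x1 then q x1 x2 else 1 := by
      intro x
      by_cases hx : x = x1
      · simp [hx]
      · simp [hx, hqsum x]
    rw [Finset.prod_congr rfl fun x _ => h2 x]
    simp
  rw [hsum, hq]
  rw [mul_comm, div_mul_cancel₀ _ (hMpos x1).ne']
end
end
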